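/- arXiv:0903.4567 — 5 statements merged into one kernel-verified Lean document; each statement's English description precedes it below -/
import Mathlib

section
/- If G is a graph with independence number at most k and at least dk+1 vertices, then G contains an induced subgraph H with at most dk+1 vertices and minimum degree at least d. -/
theorem stmt4_aux {V : Type*} [DecidableEq V] (G : SimpleGraph V) [DecidableRel G.Adj] (d : ℕ) :
    ∀ k (S : Finset V), d * k + 1 ≤ S.card →
    (∀ I ⊆ S, (∀ u ∈ I, ∀ w ∈ I, u ≠ w → ¬ G.Adj u w) → I.card ≤ k) →
    ∃ T ⊆ S, T.Nonempty ∧ ∀ v ∈ T, d ≤ (T.filter (fun u => G.Adj v u)).card := by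
  intro k
  induction k with
  | zero =>
    intro S hc hind
    have hS : 0 < S.card := by omega
    obtain ⟨v, hv⟩ := Finset.card_pos.mp hS
    have := hind {v} (by simpa) (by simp)
    simp at this
  | succ k ih =>
    intro S hc hind
    by_cases h : ∀ v ∈ S, d ≤ (S.filter (fun u => G.Adj v u)).card
    · have hS : 0 < S.card := by
        have : d * (k + 1) = d * k + d := by ring
        omega
      exact ⟨S, le_refl _, Finset.card_pos.mp hS, h⟩
    · push_neg at h
      obtain ⟨v, hvS, hvd⟩ := h
      set F := S.filter (fun u => G.Adj v u) with hF
      set S' := (S.erase v) \ F with hS'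
      have hsub : S' ⊆ S := fun x hx =>
        Finset.mem_of_mem_erase (Finset.mem_sdiff.mp hx).1
      have hcard : d * k + 1 ≤ S'.card := by
        have hsub2 : S.erase v ⊆ S' ∪ F := by
          intro x hx
          by_cases hxF : x ∈ F
          · exact Finset.mem_union_right _ hxF
          · exact Finset.mem_union_left _ (Finset.mem_sdiff.mpr ⟨hx, hxF⟩)
        have h1 : (S.erase v).card ≤ S'.card + F.card :=
          (Finset.card_le_card hsub2).trans (Finset.card_union_le _ _)
        have h2 : (S.erase v).card = S.card - 1 := Finset.card_erase_of_mem hvS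
        have h3 : 1 ≤ S.card := by
          have : d * (k + 1) = d * k + d := by ring
          omega
        have h4 : d * (k + 1) = d * k + d := by ring
        omega
      have hvS' : v ∉ S' := by
        intro hv
        exact Finset.notMem_erase v S (Finset.mem_sdiff.mp hv).1
      have hind' : ∀ I ⊆ S', (∀ u ∈ I, ∀ w ∈ I, u ≠ w → ¬ G.Adj u w) → I.card ≤ k := by
        intro I hIS hI
        have hnadj : ∀ u ∈ I, ¬ G.Adj v u := by
          intro u huI hadj
          have hu := hIS huI
          have : u ∈ F := Finset.mem_filter.mpr ⟨hsub hu, hadj⟩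
          exact (Finset.mem_sdiff.mp hu).2 this
        have hvI : v ∉ I := fun hv => hvS' (hIS hv)
        have := hind (insert v I)
          (Finset.insert_subset hvS (hIS.trans hsub))
          (by
            intro u hu w hw hne
            rcases Finset.mem_insert.mp hu with hu1 | hu1
            · rcases Finset.mem_insert.mp hw with hw1 | hw1
              · exact absurd (hu1.trans hw1.symm) hne
              · exact hu1 ▸ hnadj w hw1
            · rcases Finset.mem_insert.mp hw with hw1 | hw1
              · exact fun hadj => hnadj u hu1 (hw1 ▸ hadj).symm
              · exact hI u hu1 w hw1 hne)
        rw [Finset.card_insert_of_notMem hvI] at this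
        omega
      obtain ⟨T, hTS', hTne, hTdeg⟩ := ih S' hcard hind'
      exact ⟨T, hTS'.trans hsub, hTne, hTdeg⟩

/-- If `G` has independence number at most `k` and at least `dk+1` vertices, then `G`
contains an induced subgraph on at most `dk+1` vertices with minimum degree at least `d`. -/
theorem stmt_4 {V : Type*} [Fintype V] (G : SimpleGraph V) [DecidableRel G.Adj] (k d : ℕ)
    (hα : ∀ S : Finset V, (∀ u ∈ S, ∀ w ∈ S, u ≠ w → ¬ G.Adj u w) → S.card ≤ k)
    (hn : d * k + 1 ≤ Fintype.card V) :
    ∃ S : Finset V, S.Nonempty ∧ S.card ≤ d * k + 1 ∧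
      ∀ v ∈ S, d ≤ (S.filter (fun u => G.Adj v u)).card := by
  classical
  obtain ⟨S0, -, hS0card⟩ :=
    Finset.exists_subset_card_eq (s := (Finset.univ : Finset V)) (n := d * k + 1)
      (by simpa using hn)
  obtain ⟨T, hTS, hTne, hTdeg⟩ := stmt4_aux G d k S0 (by omega)
    (fun I _ hI => hα I hI)
  exact ⟨T, hTne, hS0card ▸ Finset.card_le_card hTS, hTdeg⟩
end

section
/- Let G be a graph with independence number at most k, and let W be a path (or cycle) in G. Then any interval of at least 2k+1 consecutive vertices of W contains two vertices at distance at least 2 and at most 2k along W that are adjacent in G. -/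
/-- In a graph with independence number at most `k`, any `2k+1` consecutive vertices of
a path (or cycle) contain two vertices at distance at least `2` (and hence at most `2k`)
along the path that are adjacent in `G` (a "jump"). -/
theorem stmt_5 {V : Type*} (G : SimpleGraph V) (k : ℕ)
    (hα : ∀ S : Finset V, (∀ u ∈ S, ∀ w ∈ S, u ≠ w → ¬ G.Adj u w) → S.card ≤ k)
    (f : Fin (2 * k + 1) → V) (hinj : Function.Injective f)
    (hadj : ∀ i : Fin (2 * k), G.Adj (f i.castSucc) (f i.succ)) :
    ∃ i j : Fin (2 * k + 1), (i : ℕ) + 2 ≤ (j : ℕ) ∧ G.Adj (f i) (f j) := by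
  classical
  -- the even-indexed vertices
  set g : Fin (k + 1) → Fin (2 * k + 1) := fun i => ⟨2 * i, by omega⟩ with hg
  have hginj : Function.Injective g := by
    intro a b hab
    have : (2 : ℕ) * a = 2 * b := congrArg Fin.val hab
    exact Fin.ext (by omega)
  have hfg : Function.Injective (f ∘ g) := hinj.comp hginj
  set S : Finset V := Finset.image (f ∘ g) Finset.univ with hS
  have hcard : S.card = k + 1 := by
    rw [hS, Finset.card_image_of_injective _ hfg, Finset.card_univ, Fintype.card_fin]
  by_contra hcon
  push_neg at hcon
  have hindep : ∀ u ∈ S, ∀ w ∈ S, u ≠ w → ¬ G.Adj u w := by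
    intro u hu w hw huw hadjuw
    simp only [hS, Finset.mem_image] at hu hw
    obtain ⟨a, -, ha⟩ := hu
    obtain ⟨b, -, hb⟩ := hw
    subst ha hb
    have hab : (a : ℕ) ≠ (b : ℕ) := by
      intro h; exact huw (congrArg (f ∘ g) (Fin.ext h))
    rcases lt_or_gt_of_ne hab with h | h
    · exact absurd hadjuw (hcon (g a) (g b) (by simp [hg]; omega)).elim
    · exact absurd hadjuw.symm (hcon (g b) (g a) (by simp [hg]; omega)).elim
  have := hα S hindep
  omega
end

section
/- Let G be a graph with independence number at most k, and suppose P is a path of length p in G joining vertices x and y. Then for any 1 ≤ q ≤ p there is a path in G joining x and y of some length ℓ with q ≤ ℓ ≤ q + 2k − 2. -/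
open SimpleGraph

section Stmt6Aux

variable {V : Type*} {G : SimpleGraph V}

private lemma aux_getVert_mem_support {u v : V} (p : G.Walk u v) {i : ℕ} (hi : i ≤ p.length) :
    p.getVert i ∈ p.support :=
  Walk.mem_support_iff_exists_getVert.2 ⟨i, rfl, hi⟩

private lemma aux_getVert_append_right {u v w : V} (p : G.Walk u v) (q : G.Walk v w) (m : ℕ) :
    (p.append q).getVert (p.length + m) = q.getVert m := by
  rw [Walk.getVert_append, if_neg (by omega)]
  congr 1
  omega

private lemma aux_getVert_append_left {u v w : V} (p : G.Walk u v) (q : G.Walk v w) {i : ℕ}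
    (hi : i ≤ p.length) : (p.append q).getVert i = p.getVert i := by
  rcases lt_or_eq_of_le hi with h | h
  · rw [Walk.getVert_append, if_pos h]
  · subst h
    rw [Walk.getVert_append, if_neg (lt_irrefl _), Nat.sub_self, Walk.getVert_zero,
      Walk.getVert_length]

private lemma aux_getVert_inj {u v : V} (p : G.Walk u v) (hp : p.IsPath) {i j : ℕ}
    (hi : i ≤ p.length) (hj : j ≤ p.length) (hij : p.getVert i = p.getVert j) : i = j := by
  induction p generalizing i j with
  | nil => simp at hi hj; omega
  | cons h q ih =>
    rw [Walk.cons_isPath_iff] at hp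
    match i, j with
    | 0, 0 => rfl
    | 0, j + 1 =>
      exfalso
      apply hp.2
      rw [Walk.getVert_zero, Walk.getVert_cons_succ] at hij
      rw [hij]
      exact aux_getVert_mem_support q (by simpa [Walk.length_cons] using hj)
    | i + 1, 0 =>
      exfalso
      apply hp.2
      rw [Walk.getVert_zero, Walk.getVert_cons_succ] at hij
      rw [← hij]
      exact aux_getVert_mem_support q (by simpa [Walk.length_cons] using hi)
    | i + 1, j + 1 =>
      have := ih hp.1 (i := i) (j := j) (by simpa [Walk.length_cons] using hi)
        (by simpa [Walk.length_cons] using hj)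
        (by simpa [Walk.getVert_cons_succ] using hij)
      omega

private lemma aux_length_takeUntil [DecidableEq V] {u v : V} {p : G.Walk u v} (hp : p.IsPath)
    {a : ℕ} (ha : a ≤ p.length) (h : p.getVert a ∈ p.support) :
    (p.takeUntil (p.getVert a) h).length = a := by
  have hspec := p.take_spec h
  have h2 : ((p.takeUntil (p.getVert a) h).append (p.dropUntil (p.getVert a) h)).getVert
      (p.takeUntil (p.getVert a) h).length = p.getVert a := by
    rw [aux_getVert_append_left _ _ le_rfl, Walk.getVert_length]
  rw [hspec] at h2
  exact aux_getVert_inj p hp (Walk.length_takeUntil_le p h) ha h2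

private lemma aux_shortcut [DecidableEq V] {x y : V} (Q : G.Walk x y) (hQ : Q.IsPath) {a b : ℕ}
    (hab : a < b) (hb : b ≤ Q.length) (hadj : G.Adj (Q.getVert a) (Q.getVert b)) :
    ∃ R : G.Walk x y, R.IsPath ∧ R.length + b = Q.length + a + 1 := by
  have ha : a ≤ Q.length := le_of_lt (lt_of_lt_of_le hab hb)
  have hu : Q.getVert a ∈ Q.support := aux_getVert_mem_support Q ha
  set T := Q.takeUntil (Q.getVert a) hu with hTdef
  set D := Q.dropUntil (Q.getVert a) hu with hDdef
  have hspec : T.append D = Q := Q.take_spec hu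
  have hT : T.length = a := aux_length_takeUntil hQ ha hu
  have hlen : T.length + D.length = Q.length := by
    rw [← Walk.length_append, hspec]
  have hD : ∀ m, D.getVert m = Q.getVert (a + m) := by
    intro m
    have := aux_getVert_append_right T D m
    rw [hspec, hT] at this
    exact this.symm
  have hDpath : D.IsPath := hQ.dropUntil hu
  have hTpath : T.IsPath := hQ.takeUntil hu
  have hba : b - a ≤ D.length := by omega
  have hDb : D.getVert (b - a) = Q.getVert b := by
    rw [hD]; congr 1; omega
  have hw : D.getVert (b - a) ∈ D.support := aux_getVert_mem_support D hba
  set T' := D.takeUntil (D.getVert (b - a)) hw with hT'def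
  set E := D.dropUntil (D.getVert (b - a)) hw with hEdef
  have hspec2 : T'.append E = D := D.take_spec hw
  have hT' : T'.length = b - a := aux_length_takeUntil hDpath hba hw
  have hlen2 : T'.length + E.length = D.length := by
    rw [← Walk.length_append, hspec2]
  have hE : ∀ m, E.getVert m = Q.getVert (b + m) := by
    intro m
    have := aux_getVert_append_right T' E m
    rw [hspec2, hT'] at this
    rw [← this, hD]
    congr 1
    omega
  have hEpath : E.IsPath := hDpath.dropUntil hw
  have hadj' : G.Adj (Q.getVert a) (D.getVert (b - a)) := by
    rw [hDb]; exact hadj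
  refine ⟨T.append (Walk.cons hadj' E), ?_, ?_⟩
  · rw [Walk.isPath_def, Walk.support_append, Walk.support_cons, List.tail_cons]
    apply List.Nodup.append hTpath.support_nodup hEpath.support_nodup
    intro z hzT hzE
    obtain ⟨i, hiz, hi⟩ := Walk.mem_support_iff_exists_getVert.1 hzT
    obtain ⟨m, hmz, hm⟩ := Walk.mem_support_iff_exists_getVert.1 hzE
    have hiQ : Q.getVert i = z := by
      have := aux_getVert_append_left T D hi
      rw [hspec] at this
      rw [this, hiz]
    have hmQ : Q.getVert (b + m) = z := by rw [← hE, hmz]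
    have hbm : b + m ≤ Q.length := by omega
    have : i = b + m := aux_getVert_inj Q hQ (by omega) hbm (by rw [hiQ, hmQ])
    omega
  · rw [Walk.length_append, Walk.length_cons]
    omega

private lemma aux_descent [DecidableEq V] {x y : V} (k : ℕ)
    (hα : ∀ S : Finset V, (∀ u ∈ S, ∀ w ∈ S, u ≠ w → ¬ G.Adj u w) → S.card ≤ k)
    (Q : G.Walk x y) (hQ : Q.IsPath) (h2k : 2 * k ≤ Q.length) :
    ∃ R : G.Walk x y, R.IsPath ∧ R.length < Q.length ∧ Q.length < R.length + 2 * k := by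
  set S : Finset V := (Finset.range (k + 1)).image (fun i => Q.getVert (2 * i)) with hS
  have hinj : Set.InjOn (fun i => Q.getVert (2 * i)) ↑(Finset.range (k + 1)) := by
    intro i hi j hj hij
    simp only [Finset.coe_range, Set.mem_Iio] at hi hj
    have := aux_getVert_inj Q hQ (i := 2 * i) (j := 2 * j) (by omega) (by omega) hij
    omega
  have hcard : S.card = k + 1 := by
    rw [hS, Finset.card_image_of_injOn hinj, Finset.card_range]
  have hnotind : ¬ (∀ u ∈ S, ∀ w ∈ S, u ≠ w → ¬ G.Adj u w) := by
    intro h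
    have := hα S h
    omega
  push_neg at hnotind
  obtain ⟨u, hu, w, hw, hne, hadj⟩ := hnotind
  rw [hS, Finset.mem_image] at hu hw
  obtain ⟨i, hi, hiu⟩ := hu
  obtain ⟨j, hj, hjw⟩ := hw
  rw [Finset.mem_range] at hi hj
  -- obtain i' < j' with adjacency
  obtain ⟨i', j', hij', hj'k, hadj'⟩ :
      ∃ i' j', i' < j' ∧ j' ≤ k ∧ G.Adj (Q.getVert (2 * i')) (Q.getVert (2 * j')) := by
    rcases lt_trichotomy i j with h | h | h
    · exact ⟨i, j, h, by omega, by rw [hiu, hjw]; exact hadj⟩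
    · exfalso; apply hne; rw [← hiu, ← hjw, h]
    · exact ⟨j, i, h, by omega, by rw [hiu, hjw]; exact hadj.symm⟩
  obtain ⟨R, hR, hRlen⟩ := aux_shortcut Q hQ (a := 2 * i') (b := 2 * j')
    (by omega) (by omega) hadj'
  exact ⟨R, hR, by omega, by omega⟩

end Stmt6Aux

/-- If `G` has independence number at most `k` and `P` is a path of length `p` from `x`
to `y`, then for every `1 ≤ q ≤ p` there is a path from `x` to `y` of some length `ℓ`
with `q ≤ ℓ ≤ q + 2k − 2`. -/
theorem stmt_6 {V : Type*} (G : SimpleGraph V) (k : ℕ) (hk : 1 ≤ k)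
    (hα : ∀ S : Finset V, (∀ u ∈ S, ∀ w ∈ S, u ≠ w → ¬ G.Adj u w) → S.card ≤ k)
    (x y : V) (P : G.Walk x y) (hP : P.IsPath) (q : ℕ) (hq1 : 1 ≤ q)
    (hqp : q ≤ P.length) :
    ∃ Q : G.Walk x y, Q.IsPath ∧ q ≤ Q.length ∧ Q.length ≤ q + 2 * k - 2 := by
  classical
  have key : ∀ n (Q : G.Walk x y), Q.IsPath → q ≤ Q.length → Q.length ≤ n →
      ∃ R : G.Walk x y, R.IsPath ∧ q ≤ R.length ∧ R.length ≤ q + 2 * k - 2 := by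
    intro n
    induction n with
    | zero => intro Q hQ hq hn; exact ⟨Q, hQ, hq, by omega⟩
    | succ n ih =>
      intro Q hQ hq hn
      by_cases hle : Q.length ≤ q + 2 * k - 2
      · exact ⟨Q, hQ, hq, hle⟩
      · have h2k : 2 * k ≤ Q.length := by omega
        obtain ⟨R, hR, hlt, hge⟩ := aux_descent k hα Q hQ h2k
        exact ih R hR (by omega) (by omega)
  exact key P.length P hP hqp le_rfl
end

section
/- If G is a bipartite graph with minimum degree at least d ≥ 1 and x is any vertex of G, then G contains a path of length at least 2d−1 starting at x. -/
/-- If `G` is bipartite with minimum degree at least `d ≥ 1` and `x` is any vertex,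
then `G` contains a path of length at least `2d−1` starting at `x`. -/
theorem stmt_8 {V : Type*} [Fintype V] (G : SimpleGraph V) (d : ℕ) (hd : 1 ≤ d)
    (hbip : ∃ X : Set V, ∀ u v : V, G.Adj u v → (u ∈ X ↔ v ∉ X))
    (hδ : ∀ v : V, d ≤ (G.neighborSet v).ncard) (x : V) :
    ∃ (y : V) (p : G.Walk x y), p.IsPath ∧ 2 * d - 1 ≤ p.length := by
  classical
  obtain ⟨X, hX⟩ := hbip
  -- bound on path lengths
  have hbdd : ∀ (z : V) (p : G.Walk x z), p.IsPath → p.length ≤ Fintype.card V := by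
    intro z p hp
    have h1 : p.support.length = p.length + 1 := SimpleGraph.Walk.length_support p
    have h2 : p.support.length ≤ Fintype.card V :=
      (hp.support_nodup).length_le_card
    omega
  -- a maximum length path
  set P : ℕ → Prop := fun n => ∃ (z : V) (p : G.Walk x z), p.IsPath ∧ p.length = n with hP
  have hPex : P 0 := ⟨x, SimpleGraph.Walk.nil, SimpleGraph.Walk.IsPath.nil, rfl⟩
  have hPbdd : ∀ n, P n → n ≤ Fintype.card V := by
    rintro n ⟨z, p, hp, rfl⟩; exact hbdd z p hp
  obtain ⟨k, hk, hkmax⟩ : ∃ k, P k ∧ ∀ m, P m → m ≤ k := by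
    have h := Nat.findGreatest_spec (P := P) (Nat.zero_le (Fintype.card V)) hPex
    refine ⟨Nat.findGreatest P (Fintype.card V), h, fun m hm => ?_⟩
    exact Nat.le_findGreatest (hPbdd m hm) hm
  obtain ⟨y, p, hp, hlen⟩ := hk
  refine ⟨y, p, hp, ?_⟩
  -- all neighbors of y lie on p
  have hnbr : ∀ z, G.Adj y z → z ∈ p.support := by
    intro z hz
    by_contra hzs
    have hconcat : (p.concat hz).IsPath := by
      rw [SimpleGraph.Walk.isPath_def, SimpleGraph.Walk.support_concat]
      have hnd := List.Nodup.concat hzs hp.support_nodup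
      rwa [List.concat_eq_append] at hnd
    have := hkmax (p.concat hz).length ⟨z, p.concat hz, hconcat, rfl⟩
    rw [SimpleGraph.Walk.length_concat] at this
    omega
  -- parity of sides along the walk
  have hside : ∀ i, i ≤ p.length → (p.getVert i ∈ X ↔ (x ∈ X ↔ Even i)) := by
    intro i
    induction i with
    | zero => simp [SimpleGraph.Walk.getVert_zero]
    | succ n ih =>
      intro hn
      have hadj : G.Adj (p.getVert n) (p.getVert (n + 1)) :=
        p.adj_getVert_succ (by omega)
      have h1 := hX _ _ hadj
      have h2 := ih (by omega)
      have : Even (n + 1) ↔ ¬ Even n := by simp [Nat.even_add_one]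
      tauto
  -- inject neighbors of y into range ((k+1)/2)
  have hy : y = p.getVert p.length := (SimpleGraph.Walk.getVert_length p).symm
  have hinj : ∀ z ∈ (G.neighborSet y).toFinset, ∃ i, i ≤ p.length ∧ p.getVert i = z ∧
      (Even i ↔ ¬ Even p.length) := by
    intro z hz
    rw [Set.mem_toFinset, SimpleGraph.mem_neighborSet] at hz
    obtain ⟨i, hiz, hile⟩ := (SimpleGraph.Walk.mem_support_iff_exists_getVert).1 (hnbr z hz)
    refine ⟨i, hile, hiz, ?_⟩
    have h1 := hside i hile
    have h2 := hside p.length le_rfl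
    have h3 := hX y z hz
    rw [← hy] at h2
    rw [hiz] at h1
    tauto
  choose f hf1 hf2 hf3 using hinj
  set g : V → ℕ := fun z => if hz : z ∈ (G.neighborSet y).toFinset then f z hz / 2 else 0 with hg
  have hcard : (G.neighborSet y).toFinset.card ≤ (Finset.range ((p.length + 1) / 2)).card := by
    apply Finset.card_le_card_of_injOn g
    · intro z hz'
      have hz : z ∈ (G.neighborSet y).toFinset := Finset.mem_coe.mp hz'
      rw [Finset.mem_coe, Finset.mem_range, hg]
      simp only [hz, dif_pos]
      have h1 := hf1 z hz
      have h2 := hf3 z hz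
      rw [Nat.even_iff, Nat.even_iff] at h2
      omega
    · intro z hz' w hw' hzw
      have hz : z ∈ (G.neighborSet y).toFinset := Finset.mem_coe.mp hz'
      have hw : w ∈ (G.neighborSet y).toFinset := Finset.mem_coe.mp hw'
      have hzw' : f z hz / 2 = f w hw / 2 := by
        simp only [hg] at hzw
        rwa [dif_pos hz, dif_pos hw] at hzw
      have h2z := hf3 z hz
      have h2w := hf3 w hw
      have : f z hz = f w hw := by
        rw [Nat.even_iff, Nat.even_iff] at h2z h2w
        omega
      rw [← hf2 z hz, ← hf2 w hw, this]
  have hn := hδ y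
  rw [Set.ncard_eq_toFinset_card'] at hn
  rw [Finset.card_range] at hcard
  omega
end

section
/- Let G be a graph containing no cycle of length ℓ, let T be a tree subgraph of G, v a vertex of T, and h < ℓ/2. If Z is the set of vertices at distance exactly h from v in T, then the induced subgraph G[Z] is (ℓ−2)-colourable; in particular Z contains an independent set of G of size at least |Z|/(ℓ−2). -/
set_option linter.unusedSectionVars false
set_option maxHeartbeats 1000000

open SimpleGraph


open SimpleGraph

section Helpers

variable {V : Type*} {G : SimpleGraph V}

private lemma walk_length_zero_eq {a b : V} (p : G.Walk a b) (h : p.length = 0) : a = b := by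
  cases p with
  | nil => rfl
  | cons h q => simp [SimpleGraph.Walk.length_cons] at h

private lemma loop_isPath_length {a : V} (p : G.Walk a a) (hp : p.IsPath) : p.length = 0 := by
  cases p with
  | nil => rfl
  | cons h q =>
    exfalso
    rw [SimpleGraph.Walk.cons_isPath_iff] at hp
    exact hp.2 (q.end_mem_support)

private lemma concat_isPath {a b y : V} (p : G.Walk a b) (hp : p.IsPath) (hadj : G.Adj b y)
    (hy : y ∉ p.support) : (p.concat hadj).IsPath := by
  rw [SimpleGraph.Walk.isPath_def, SimpleGraph.Walk.support_concat,
    List.nodup_append]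
  refine ⟨hp.support_nodup, List.nodup_singleton y, ?_⟩
  intro z hz w hz' hzw
  rw [List.mem_singleton] at hz'
  subst hz'
  subst hzw
  exact hy hz

private lemma edge_path_length_one {a b : V} (hab : a ≠ b) (p : G.Walk a b) (hp : p.IsPath)
    (he : s(a, b) ∈ p.edges) : p.length = 1 := by
  cases p with
  | nil => simp at he
  | cons h q =>
    rename_i c
    rw [SimpleGraph.Walk.edges_cons, List.mem_cons] at he
    rw [SimpleGraph.Walk.cons_isPath_iff] at hp
    rcases he with he | he
    · rw [Sym2.eq_iff] at he
      rcases he with ⟨-, hbc⟩ | ⟨hac, -⟩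
      · subst hbc
        have := loop_isPath_length q hp.1
        simp [SimpleGraph.Walk.length_cons, this]
      · exact absurd hac h.ne
    · exact absurd (SimpleGraph.Walk.fst_mem_support_of_mem_edges q he) hp.2

/-- Build a cycle from two internally disjoint paths, one inside `Zs`, one (internally) outside. -/
private lemma build_cycle {u x : V} (A : G.Walk u x) (B : G.Walk x u)
    (hA : A.IsPath) (hB : B.IsPath) (hne : u ≠ x) (Zs : Set V)
    (hAZ : ∀ z ∈ A.support, z ∈ Zs)
    (hBZ : ∀ z ∈ B.support, z ≠ u → z ≠ x → z ∉ Zs)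
    (hlen3 : 3 ≤ A.length + B.length) : (A.append B).IsCycle := by
  have hBtail : ∀ z ∈ B.support.tail, z ≠ u → z ∉ Zs := by
    intro z hz hzu
    have hzB : z ∈ B.support := List.mem_of_mem_tail hz
    have hzx : z ≠ x := by
      intro hzx; subst hzx
      have := hB.support_nodup
      rw [SimpleGraph.Walk.support_eq_cons] at this
      exact (List.nodup_cons.mp this).1 hz
    exact hBZ z hzB hzu hzx
  rw [SimpleGraph.Walk.isCycle_def]
  refine ⟨?_, ?_, ?_⟩
  · -- trail
    rw [SimpleGraph.Walk.isTrail_def, SimpleGraph.Walk.edges_append, List.nodup_append]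
    refine ⟨hA.isTrail.edges_nodup, hB.isTrail.edges_nodup, ?_⟩
    intro e heA e' heB hee
    subst hee
    induction e with
    | h c₁ c₂ =>
      have hc₁A := SimpleGraph.Walk.fst_mem_support_of_mem_edges A heA
      have hc₂A := SimpleGraph.Walk.snd_mem_support_of_mem_edges A heA
      have hc₁B := SimpleGraph.Walk.fst_mem_support_of_mem_edges B heB
      have hc₂B := SimpleGraph.Walk.snd_mem_support_of_mem_edges B heB
      have hadj : G.Adj c₁ c₂ := A.adj_of_mem_edges heA
      have hc₁ : c₁ = u ∨ c₁ = x := by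
        by_contra hcon
        push_neg at hcon
        exact hBZ c₁ hc₁B hcon.1 hcon.2 (hAZ c₁ hc₁A)
      have hc₂ : c₂ = u ∨ c₂ = x := by
        by_contra hcon
        push_neg at hcon
        exact hBZ c₂ hc₂B hcon.1 hcon.2 (hAZ c₂ hc₂A)
      have hAe : s(u, x) ∈ A.edges := by
        rcases hc₁ with rfl | rfl <;> rcases hc₂ with rfl | rfl
        · exact absurd rfl hadj.ne
        · exact heA
        · rw [Sym2.eq_swap]; exact heA
        · exact absurd rfl hadj.ne
      have hBe : s(x, u) ∈ B.edges := by
        rcases hc₁ with rfl | rfl <;> rcases hc₂ with rfl | rfl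
        · exact absurd rfl hadj.ne
        · rw [Sym2.eq_swap]; exact heB
        · exact heB
        · exact absurd rfl hadj.ne
      have h1 := edge_path_length_one hne A hA hAe
      have h2 := edge_path_length_one (Ne.symm hne) B hB hBe
      omega
  · -- nonempty
    intro hnil
    have : (A.append B).length = 0 := by rw [hnil]; rfl
    rw [SimpleGraph.Walk.length_append] at this
    omega
  · -- support tail nodup
    have hsup : (A.append B).support = A.support ++ B.support.tail :=
      SimpleGraph.Walk.support_append A B
    rw [hsup, SimpleGraph.Walk.support_eq_cons A, List.cons_append, List.tail_cons,
      List.nodup_append]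
    have hAnodup := hA.support_nodup
    rw [SimpleGraph.Walk.support_eq_cons A, List.nodup_cons] at hAnodup
    refine ⟨hAnodup.2, ?_, ?_⟩
    · have := hB.support_nodup
      rw [SimpleGraph.Walk.support_eq_cons B, List.nodup_cons] at this
      exact this.2
    · intro z hzA z' hzB hzz
      subst hzz
      have hzZ : z ∈ Zs := hAZ z (List.mem_of_mem_tail hzA)
      have hzu : z ≠ u := by
        intro h; subst h; exact hAnodup.1 hzA
      exact hBtail z hzB hzu hzZ

end Helpers


open SimpleGraph

section TreeGeo

variable {VT : Type*} [DecidableEq VT] {TT : SimpleGraph VT}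

private lemma tree_path_eq (ht : TT.IsTree) {a b : VT} (p q : TT.Walk a b)
    (hp : p.IsPath) (hq : q.IsPath) : p = q := by
  have := ht.IsAcyclic.path_unique ⟨p, hp⟩ ⟨q, hq⟩
  exact congrArg Subtype.val this

private lemma exists_geodesic (ht : TT.IsTree) (a b : VT) :
    ∃ p : TT.Walk a b, p.IsPath ∧ p.length = TT.dist a b := by
  obtain ⟨q, hq⟩ := ht.isConnected.exists_walk_length_eq_dist a b
  refine ⟨q.bypass, q.bypass_isPath, le_antisymm ?_ (SimpleGraph.dist_le _)⟩
  calc q.bypass.length ≤ q.length := q.length_bypass_le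
    _ = TT.dist a b := hq

private lemma tree_path_length (ht : TT.IsTree) {a b : VT} (p : TT.Walk a b) (hp : p.IsPath) :
    p.length = TT.dist a b := by
  obtain ⟨q, hq, hlen⟩ := exists_geodesic ht a b
  rw [tree_path_eq ht p q hp hq, hlen]

private lemma tree_takeUntil_length (ht : TT.IsTree) {a b : VT} (p : TT.Walk a b)
    (hp : p.IsPath) {w : VT} (hw : w ∈ p.support) :
    (p.takeUntil w hw).length = TT.dist a w :=
  tree_path_length ht _ (hp.takeUntil hw)

private lemma tree_dropUntil_length (ht : TT.IsTree) {a b : VT} (p : TT.Walk a b)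
    (hp : p.IsPath) {w : VT} (hw : w ∈ p.support) :
    (p.dropUntil w hw).length = TT.dist w b :=
  tree_path_length ht _ (hp.dropUntil hw)

private lemma tree_dist_split (ht : TT.IsTree) {a b : VT} (p : TT.Walk a b)
    (hp : p.IsPath) {w : VT} (hw : w ∈ p.support) :
    p.length = TT.dist a w + TT.dist w b := by
  conv_lhs => rw [← p.take_spec hw]
  rw [SimpleGraph.Walk.length_append, tree_takeUntil_length ht p hp hw,
    tree_dropUntil_length ht p hp hw]

/-- radial lemma: the minimum-depth vertex of a path lies on the geodesic from the root. -/
private lemma tree_radial (ht : TT.IsTree) (v : VT) {a b : VT} (p : TT.Walk a b)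
    (hp : p.IsPath) {w : VT} (hw : w ∈ p.support)
    (hmin : ∀ z ∈ p.support, TT.dist v w ≤ TT.dist v z) :
    TT.dist v a = TT.dist v w + TT.dist w a := by
  obtain ⟨pv, hpv, hpvlen⟩ := exists_geodesic ht v w
  set A := p.takeUntil w hw with hA
  have hApath : A.IsPath := hp.takeUntil hw
  have hAlen : A.length = TT.dist a w := tree_takeUntil_length ht p hp hw
  -- the combined walk v → w → a
  have hdisj : ∀ z ∈ pv.support, z ∈ A.support → z = w := by
    intro z hzv hzA
    have h1 : TT.dist v z = (pv.takeUntil z hzv).length :=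
      (tree_takeUntil_length ht pv hpv hzv).symm
    have h2 : (pv.takeUntil z hzv).length ≤ pv.length := pv.length_takeUntil_le hzv
    have h3 : TT.dist v w ≤ TT.dist v z :=
      hmin z ((p.support_takeUntil_subset hw) hzA)
    have h4 : TT.dist v z = TT.dist v w := by omega
    -- takeUntil has full length, so dropUntil is trivial
    have h5 : (pv.takeUntil z hzv).length + (pv.dropUntil z hzv).length = pv.length := by
      conv_rhs => rw [← pv.take_spec hzv]
      rw [SimpleGraph.Walk.length_append]
    have h6 : (pv.dropUntil z hzv).length = 0 := by omega
    exact walk_length_zero_eq _ h6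
  have hcomb : (pv.append A.reverse).IsPath := by
    rw [SimpleGraph.Walk.isPath_def, SimpleGraph.Walk.support_append, List.nodup_append]
    refine ⟨hpv.support_nodup, ?_, ?_⟩
    · have := hApath.reverse.support_nodup
      rw [SimpleGraph.Walk.support_eq_cons A.reverse, List.nodup_cons] at this
      exact this.2
    · intro z hzv z' hzrev hzz
      subst hzz
      have hzA : z ∈ A.support := by
        have : z ∈ A.reverse.support := List.mem_of_mem_tail hzrev
        rw [SimpleGraph.Walk.support_reverse, List.mem_reverse] at this
        exact this
      have hzw : z = w := hdisj z hzv hzA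
      subst hzw
      have := hApath.reverse.support_nodup
      rw [SimpleGraph.Walk.support_eq_cons A.reverse, List.nodup_cons] at this
      exact this.1 hzrev
  have := tree_path_length ht _ hcomb
  rw [SimpleGraph.Walk.length_append, SimpleGraph.Walk.length_reverse] at this
  rw [← this, hpvlen, hAlen, SimpleGraph.dist_comm (u := a)]

private lemma tree_gvf (ht : TT.IsTree) (v : VT) {a b : VT} (p : TT.Walk a b)
    (hp : p.IsPath) {w : VT} (hw : w ∈ p.support)
    (hmin : ∀ z ∈ p.support, TT.dist v w ≤ TT.dist v z) :
    p.length + 2 * TT.dist v w = TT.dist v a + TT.dist v b := by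
  have h1 : TT.dist v a = TT.dist v w + TT.dist w a := tree_radial ht v p hp hw hmin
  have hwrev : w ∈ p.reverse.support := by
    rw [SimpleGraph.Walk.support_reverse, List.mem_reverse]; exact hw
  have h2 : TT.dist v b = TT.dist v w + TT.dist w b :=
    tree_radial ht v p.reverse hp.reverse hwrev (fun z hz => by
      apply hmin
      rw [SimpleGraph.Walk.support_reverse, List.mem_reverse] at hz
      exact hz)
  have h3 : p.length = TT.dist a w + TT.dist w b := tree_dist_split ht p hp hw
  rw [SimpleGraph.dist_comm (u := a) (v := w)] at h3
  omega

private lemma exists_min_depth (v : VT) {a b : VT} (p : TT.Walk a b) :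
    ∃ w ∈ p.support, ∀ z ∈ p.support, TT.dist v w ≤ TT.dist v z := by
  obtain ⟨w, hw, hmin⟩ := Finset.exists_min_image p.support.toFinset
    (fun z => TT.dist v z) ⟨a, List.mem_toFinset.mpr p.start_mem_support⟩
  exact ⟨w, List.mem_toFinset.mp hw, fun z hz => hmin z (List.mem_toFinset.mpr hz)⟩

/-- dist between two vertices at depth `h` is `2h - 2m` for some `m ≤ h`. -/
private lemma tree_dist_level (ht : TT.IsTree) (v : VT) (h : ℕ) {a b : VT}
    (hda : TT.dist v a = h) (hdb : TT.dist v b = h) :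
    ∃ m, m ≤ h ∧ TT.dist a b + 2 * m = 2 * h := by
  obtain ⟨p, hp, hlen⟩ := exists_geodesic ht a b
  obtain ⟨w, hw, hmin⟩ := exists_min_depth v p
  refine ⟨TT.dist v w, ?_, ?_⟩
  · have := hmin a p.start_mem_support; omega
  · have := tree_gvf ht v p hp hw hmin
    omega

/-- ultrametric inequality at a fixed level. -/
private lemma tree_ultra (ht : TT.IsTree) (v : VT) (h : ℕ) {a b c : VT}
    (hda : TT.dist v a = h) (hdb : TT.dist v b = h) (hdc : TT.dist v c = h) :
    TT.dist a c ≤ max (TT.dist a b) (TT.dist b c) := by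
  obtain ⟨pab, hpab, hlab⟩ := exists_geodesic ht a b
  obtain ⟨pbc, hpbc, hlbc⟩ := exists_geodesic ht b c
  set pac := (pab.append pbc).bypass with hpac
  have hpacpath : pac.IsPath := (pab.append pbc).bypass_isPath
  have hlac : pac.length = TT.dist a c := tree_path_length ht _ hpacpath
  obtain ⟨w, hw, hmin⟩ := exists_min_depth v pac
  have hgvf := tree_gvf ht v pac hpacpath hw hmin
  rw [hlac, hda, hdc] at hgvf
  have hwmem : w ∈ pab.support ∨ w ∈ pbc.support := by
    have h1 : w ∈ (pab.append pbc).support := (pab.append pbc).support_bypass_subset hw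
    rw [SimpleGraph.Walk.support_append, List.mem_append] at h1
    rcases h1 with h1 | h1
    · exact Or.inl h1
    · exact Or.inr (List.mem_of_mem_tail h1)
  rcases hwmem with hwm | hwm
  · obtain ⟨w₁, hw₁, hmin₁⟩ := exists_min_depth v pab
    have hgvf₁ := tree_gvf ht v pab hpab hw₁ hmin₁
    rw [hlab, hda, hdb] at hgvf₁
    have : TT.dist v w₁ ≤ TT.dist v w := hmin₁ w hwm
    have hle : TT.dist a c ≤ TT.dist a b := by omega
    exact le_trans hle (le_max_left _ _)
  · obtain ⟨w₁, hw₁, hmin₁⟩ := exists_min_depth v pbc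
    have hgvf₁ := tree_gvf ht v pbc hpbc hw₁ hmin₁
    rw [hlbc, hdb, hdc] at hgvf₁
    have : TT.dist v w₁ ≤ TT.dist v w := hmin₁ w hwm
    have hle : TT.dist a c ≤ TT.dist b c := by omega
    exact le_trans hle (le_max_right _ _)

/-- interior vertices of a geodesic between two depth-`h` vertices are strictly above. -/
private lemma tree_interior (ht : TT.IsTree) (v : VT) (h : ℕ) {a b : VT} (p : TT.Walk a b)
    (hp : p.IsPath) (hda : TT.dist v a = h) (hdb : TT.dist v b = h)
    {w : VT} (hw : w ∈ p.support) (hwa : w ≠ a) (hwb : w ≠ b) :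
    TT.dist v w < h := by
  set A := p.takeUntil w hw with hA
  set B := p.dropUntil w hw with hB
  have hApath : A.IsPath := hp.takeUntil hw
  have hBpath : B.IsPath := hp.dropUntil hw
  have hL1 : A.length = TT.dist a w := tree_takeUntil_length ht p hp hw
  have hL2 : B.length = TT.dist w b := tree_dropUntil_length ht p hp hw
  have hL1pos : 1 ≤ A.length := by
    rcases Nat.eq_zero_or_pos A.length with h0 | h0
    · exact absurd (walk_length_zero_eq A h0).symm hwa
    · omega
  have hL2pos : 1 ≤ B.length := by
    rcases Nat.eq_zero_or_pos B.length with h0 | h0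
    · exact absurd (walk_length_zero_eq B h0) hwb
    · omega
  obtain ⟨w₁, hw₁, hmin₁⟩ := exists_min_depth v A
  obtain ⟨w₂, hw₂, hmin₂⟩ := exists_min_depth v B
  obtain ⟨w₀, hw₀, hmin₀⟩ := exists_min_depth v p
  have hwAmem : w ∈ A.support := A.end_mem_support
  have hwBmem : w ∈ B.support := B.start_mem_support
  have hsubA : ∀ z ∈ A.support, z ∈ p.support := p.support_takeUntil_subset hw
  have hsubB : ∀ z ∈ B.support, z ∈ p.support := p.support_dropUntil_subset hw
  have hg1 := tree_gvf ht v A hApath hw₁ hmin₁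
  have hg2 := tree_gvf ht v B hBpath hw₂ hmin₂
  have hg0 := tree_gvf ht v p hp hw₀ hmin₀
  rw [hda] at hg1 hg0
  rw [hdb] at hg2 hg0
  have hplen : p.length = A.length + B.length := by
    conv_lhs => rw [← p.take_spec hw]
    rw [SimpleGraph.Walk.length_append]
  -- the global min is attained on A or on B
  have hcase : TT.dist v w₀ = TT.dist v w₁ ∨ TT.dist v w₀ = TT.dist v w₂ := by
    have hmem : w₀ ∈ A.support ∨ w₀ ∈ B.support := by
      have h1 : w₀ ∈ p.support := hw₀
      conv at h1 => rw [← p.take_spec hw]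
      rw [SimpleGraph.Walk.support_append, List.mem_append] at h1
      rcases h1 with h1 | h1
      · exact Or.inl h1
      · exact Or.inr (List.mem_of_mem_tail h1)
    rcases hmem with hm | hm
    · exact Or.inl (le_antisymm (hmin₀ w₁ (hsubA w₁ hw₁)) (hmin₁ w₀ hm))
    · exact Or.inr (le_antisymm (hmin₀ w₂ (hsubB w₂ hw₂)) (hmin₂ w₀ hm))
  have hq1 : TT.dist v w₁ ≤ TT.dist v w := hmin₁ w hwAmem
  have hq2 : TT.dist v w₂ ≤ TT.dist v w := hmin₂ w hwBmem
  rcases hcase with hc | hc <;> omega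

end TreeGeo

open SimpleGraph

section Core

variable {W : Type*} [Fintype W] [DecidableEq W] {X : SimpleGraph W} [DecidableRel X.Adj]

/-- a proper colouring of the induced subgraph on `A`, as a total function. -/
private def GoodCol (ℓ : ℕ) (X : SimpleGraph W) (A : Finset W) : Prop :=
  ∃ c : W → Fin (ℓ - 2), ∀ a ∈ A, ∀ b ∈ A, X.Adj a b → c a ≠ c b

private lemma goodcol_empty {ℓ : ℕ} (hℓ : 3 ≤ ℓ) : GoodCol ℓ X (∅ : Finset W) :=
  ⟨fun _ => ⟨0, by omega⟩, fun a ha => by simp at ha⟩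

private lemma goodcol_combine {ℓ : ℕ} {A B : Finset W}
    (hcross : ∀ a ∈ A, ∀ b ∈ B, ¬ X.Adj a b)
    (hA : GoodCol ℓ X A) (hB : GoodCol ℓ X B) : GoodCol ℓ X (A ∪ B) := by
  obtain ⟨cA, hcA⟩ := hA
  obtain ⟨cB, hcB⟩ := hB
  refine ⟨fun z => if z ∈ A then cA z else cB z, ?_⟩
  intro a ha b hb hadj
  by_cases haA : a ∈ A <;> by_cases hbA : b ∈ A
  · simp only [if_pos haA, if_pos hbA]; exact hcA a haA b hbA hadj
  · exfalso
    have hbB : b ∈ B := by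
      rcases Finset.mem_union.mp hb with h | h
      · exact absurd h hbA
      · exact h
    exact hcross a haA b hbB hadj
  · exfalso
    have haB : a ∈ B := by
      rcases Finset.mem_union.mp ha with h | h
      · exact absurd h haA
      · exact h
    exact hcross b hbA a haB hadj.symm
  · simp only [if_neg haA, if_neg hbA]
    have haB : a ∈ B := by
      rcases Finset.mem_union.mp ha with h | h
      · exact absurd h haA
      · exact h
    have hbB : b ∈ B := by
      rcases Finset.mem_union.mp hb with h | h
      · exact absurd h hbA
      · exact h
    exact hcB a haB b hbB hadj

private lemma goodcol_extend {ℓ : ℕ} (hℓ : 3 ≤ ℓ) {A : Finset W} {w : W}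
    (hdeg : ((A.erase w).filter (X.Adj w)).card + 3 ≤ ℓ)
    (hg : GoodCol ℓ X (A.erase w)) : GoodCol ℓ X A := by
  obtain ⟨c₁, hc₁⟩ := hg
  set used := ((A.erase w).filter (X.Adj w)).image c₁ with hused
  have husedcard : used.card < ℓ - 2 := by
    have h1 : used.card ≤ ((A.erase w).filter (X.Adj w)).card := Finset.card_image_le
    omega
  have hexists : ∃ c₀ : Fin (ℓ - 2), c₀ ∉ used := by
    by_contra hcon
    push_neg at hcon
    have : (Finset.univ : Finset (Fin (ℓ - 2))) ⊆ used := fun z _ => hcon z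
    have := Finset.card_le_card this
    rw [Finset.card_univ, Fintype.card_fin] at this
    omega
  obtain ⟨c₀, hc₀⟩ := hexists
  refine ⟨Function.update c₁ w c₀, ?_⟩
  intro a ha b hb hadj
  by_cases haw : a = w <;> by_cases hbw : b = w
  · subst haw; exact absurd (hbw ▸ hadj) X.irrefl
  · subst haw
    rw [Function.update_self, Function.update_of_ne hbw]
    intro heq
    apply hc₀
    rw [hused]
    apply Finset.mem_image.mpr
    exact ⟨b, Finset.mem_filter.mpr ⟨Finset.mem_erase.mpr ⟨hbw, hb⟩, hadj⟩, heq.symm⟩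
  · subst hbw
    rw [Function.update_self, Function.update_of_ne haw]
    intro heq
    apply hc₀
    rw [hused]
    apply Finset.mem_image.mpr
    exact ⟨a, Finset.mem_filter.mpr ⟨Finset.mem_erase.mpr ⟨haw, ha⟩, hadj.symm⟩, heq⟩
  · rw [Function.update_of_ne haw, Function.update_of_ne hbw]
    exact hc₁ a (Finset.mem_erase.mpr ⟨haw, ha⟩) b (Finset.mem_erase.mpr ⟨hbw, hb⟩) hadj

/-- greedy path building in a min-degree set. -/
private lemma greedy {ℓ : ℕ} {S : Finset W}
    (hmindeg : ∀ w ∈ S, ℓ ≤ (S.filter (X.Adj w)).card + 2) :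
    ∀ (k : ℕ) (B : Finset W) (a : W), a ∈ S → a ∉ B → k + B.card + 2 ≤ ℓ →
    ∃ (b : W) (p : X.Walk a b), p.IsPath ∧ p.length = k ∧ (∀ z ∈ p.support, z ∈ S) ∧
      ∀ z ∈ p.support, z ∉ B := by
  intro k
  induction k with
  | zero =>
    intro B a haS haB _
    exact ⟨a, Walk.nil, by simp, by simp, by simp [haS], by simp [haB]⟩
  | succ k ih =>
    intro B a haS haB hcard
    obtain ⟨b, p, hpath, hlen, hS, hB⟩ := ih B a haS haB (by omega)
    have hbS : b ∈ S := hS b p.end_mem_support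
    set t : Finset W := (p.support.toFinset.erase b) ∪ B with ht
    have htcard : t.card ≤ k + B.card := by
      have h1 : (p.support.toFinset.erase b).card ≤ k := by
        have h2 : p.support.toFinset.card ≤ p.support.length := p.support.toFinset_card_le
        have h3 : p.support.length = k + 1 := by
          rw [SimpleGraph.Walk.length_support, hlen]
        have h4 : b ∈ p.support.toFinset := List.mem_toFinset.mpr p.end_mem_support
        rw [Finset.card_erase_of_mem h4]
        omega
      calc t.card ≤ (p.support.toFinset.erase b).card + B.card := Finset.card_union_le _ _
        _ ≤ k + B.card := by omega
    have hfil : ∀ z ∈ S.filter (X.Adj b), (z ∈ p.support.toFinset ∪ B ↔ z ∈ t) := by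
      intro z hz
      have hzb : z ≠ b := fun h => X.irrefl (h ▸ (Finset.mem_filter.mp hz).2)
      rw [ht]
      simp only [Finset.mem_union, Finset.mem_erase]
      tauto
    have hne : ((S.filter (X.Adj b)) \ t).Nonempty := by
      rw [← Finset.card_pos]
      have h1 : (S.filter (X.Adj b)).card ≤ ((S.filter (X.Adj b)) \ t).card + t.card :=
        Finset.card_le_card_sdiff_add_card
      have h2 := hmindeg b hbS
      omega
    obtain ⟨y, hy⟩ := hne
    rw [Finset.mem_sdiff] at hy
    have hyS : y ∈ S := (Finset.mem_filter.mp hy.1).1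
    have hyadj : X.Adj b y := (Finset.mem_filter.mp hy.1).2
    have hynot : y ∉ p.support.toFinset ∪ B := by
      rw [hfil y hy.1]; exact hy.2
    rw [Finset.mem_union] at hynot
    push_neg at hynot
    have hysupp : y ∉ p.support := fun h => hynot.1 (List.mem_toFinset.mpr h)
    refine ⟨y, p.concat hyadj, concat_isPath p hpath hyadj hysupp, ?_, ?_, ?_⟩
    · rw [SimpleGraph.Walk.length_concat, hlen]
    · intro z hz
      rw [SimpleGraph.Walk.support_concat, List.mem_append] at hz
      rcases hz with hz | hz
      · exact hS z hz
      · rw [List.mem_singleton] at hz; exact hz ▸ hyS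
    · intro z hz
      rw [SimpleGraph.Walk.support_concat, List.mem_append] at hz
      rcases hz with hz | hz
      · exact hB z hz
      · rw [List.mem_singleton] at hz; exact hz ▸ hynot.2

/-- transitivity of a relation along a walk whose edges satisfy it. -/
private lemma walk_chain (r : W → W → Prop) (hrefl : ∀ a, r a a)
    (htrans : ∀ a b c, r a b → r b c → r a c) (S : Finset W)
    (hedge : ∀ x ∈ S, ∀ y ∈ S, X.Adj x y → r x y) :
    ∀ {a b : W} (p : X.Walk a b), (∀ z ∈ p.support, z ∈ S) → r a b := by
  intro a b p
  induction p with
  | nil => exact fun _ => hrefl _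
  | cons h q ih =>
    intro hsup
    rename_i c d e
    have hc : c ∈ S := hsup c (SimpleGraph.Walk.start_mem_support _)
    have hd : d ∈ S := by
      apply hsup
      rw [SimpleGraph.Walk.support_cons]
      exact List.mem_cons_of_mem _ q.start_mem_support
    refine htrans _ _ _ (hedge c hc d hd h) (ih ?_)
    intro z hz
    apply hsup
    rw [SimpleGraph.Walk.support_cons]
    exact List.mem_cons_of_mem _ hz

/-- two-step invariance along even walks. -/
private lemma twostep (r : W → W → Prop) (hrefl : ∀ a, r a a)
    (htrans : ∀ a b c, r a b → r b c → r a c) (S : Finset W)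
    (hcol : ∀ x ∈ S, ∀ y ∈ S, ∀ z ∈ S, X.Adj x y → X.Adj y z → r x z) :
    ∀ (n : ℕ) {a b : W} (p : X.Walk a b), p.length = n → Even n →
      (∀ z ∈ p.support, z ∈ S) → r a b := by
  intro n
  induction n using Nat.strong_induction_on with
  | _ n ih =>
    intro a b p hlen heven hsup
    match p with
    | Walk.nil => exact hrefl _
    | Walk.cons h₁ Walk.nil =>
      exfalso
      rw [← hlen] at heven
      simp [SimpleGraph.Walk.length_cons] at heven
    | Walk.cons h₁ (Walk.cons h₂ q) =>
      rename_i a₁ a₂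
      have hlq : q.length + 2 = n := by
        rw [← hlen]; simp [SimpleGraph.Walk.length_cons]
      have hsup' : ∀ z ∈ q.support, z ∈ S := by
        intro z hz
        apply hsup
        rw [SimpleGraph.Walk.support_cons, SimpleGraph.Walk.support_cons]
        exact List.mem_cons_of_mem _ (List.mem_cons_of_mem _ hz)
      have haS : a ∈ S := hsup a (SimpleGraph.Walk.start_mem_support _)
      have ha₁S : a₁ ∈ S := by
        apply hsup
        rw [SimpleGraph.Walk.support_cons]
        exact List.mem_cons_of_mem _ (SimpleGraph.Walk.start_mem_support _)
      have ha₂S : a₂ ∈ S := by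
        apply hsup
        rw [SimpleGraph.Walk.support_cons, SimpleGraph.Walk.support_cons]
        exact List.mem_cons_of_mem _ (List.mem_cons_of_mem _ q.start_mem_support)
      have h1 : r a a₂ := hcol a haS a₁ ha₁S a₂ ha₂S h₁ h₂
      have h2 : r a₂ b := by
        refine ih q.length (by omega) q rfl ?_ hsup'
        rcases heven with ⟨m, hm⟩
        exact ⟨m - 1, by omega⟩
      exact htrans _ _ _ h1 h2

end Core

open SimpleGraph

section CoreMain

variable {W : Type*} [Fintype W] [DecidableEq W] {X : SimpleGraph W} [DecidableRel X.Adj]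

private lemma core_colorable {ℓ : ℕ} (hℓ : 3 ≤ ℓ) (d : W → W → ℕ)
    (hsym : ∀ u x, d u x = d x u)
    (hzero : ∀ u x, d u x = 0 ↔ u = x)
    (heven : ∀ u x, Even (d u x))
    (hub : ∀ u x, d u x + 1 ≤ ℓ)
    (hultra : ∀ u x y, d u y ≤ max (d u x) (d x y))
    (hkey : ∀ u x, u ≠ x → ∀ p : X.Walk u x, p.IsPath → p.length + d u x = ℓ → False) :
    X.Colorable (ℓ - 2) := by
  classical
  by_contra hcol
  have hbadU : ¬ GoodCol ℓ X (Finset.univ : Finset W) := by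
    intro hg
    obtain ⟨c, hc⟩ := hg
    exact hcol ⟨SimpleGraph.Coloring.mk c (fun {a b} hadj =>
      hc a (Finset.mem_univ a) b (Finset.mem_univ b) hadj)⟩
  have H0 : ∃ n, ∃ A : Finset W, A.card = n ∧ ¬ GoodCol ℓ X A :=
    ⟨Finset.univ.card, Finset.univ, rfl, hbadU⟩
  obtain ⟨S, hScard, hSbad⟩ := Nat.find_spec H0
  have hmincard : ∀ B : Finset W, B.card < S.card → GoodCol ℓ X B := by
    intro B hB
    by_contra hBbad
    exact Nat.find_min H0 (hScard ▸ hB) ⟨B, rfl, hBbad⟩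
  have hmindeg : ∀ w ∈ S, ℓ ≤ (S.filter (X.Adj w)).card + 2 := by
    intro w hw
    by_contra hcon
    push_neg at hcon
    apply hSbad
    apply goodcol_extend hℓ (w := w)
    · have hsub : (S.erase w).filter (X.Adj w) ⊆ S.filter (X.Adj w) :=
        Finset.filter_subset_filter _ (Finset.erase_subset _ _)
      have := Finset.card_le_card hsub
      omega
    · exact hmincard _ (by rw [Finset.card_erase_of_mem hw]; have := Finset.card_pos.mpr ⟨w, hw⟩; omega)
  have hSne : S.Nonempty := by
    rcases Finset.eq_empty_or_nonempty S with h | h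
    · exact absurd (h ▸ goodcol_empty hℓ) hSbad
    · exact h
  have hconn : ∀ a ∈ S, ∀ b ∈ S, ∃ p : X.Walk a b, ∀ z ∈ p.support, z ∈ S := by
    intro a ha b hb
    set R := S.filter (fun b' => ∃ p : X.Walk a b', ∀ z ∈ p.support, z ∈ S) with hR
    have haR : a ∈ R := by
      rw [hR, Finset.mem_filter]
      exact ⟨ha, Walk.nil, by simpa using ha⟩
    have hclosed : ∀ w ∈ R, ∀ y ∈ S, X.Adj w y → y ∈ R := by
      intro w hw y hy hadj
      rw [hR, Finset.mem_filter] at hw ⊢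
      obtain ⟨hwS, p, hp⟩ := hw
      refine ⟨hy, p.concat hadj, ?_⟩
      intro z hz
      rw [SimpleGraph.Walk.support_concat, List.mem_append] at hz
      rcases hz with hz | hz
      · exact hp z hz
      · rw [List.mem_singleton] at hz; exact hz ▸ hy
    have hbR : b ∈ R := by
      by_contra hbnR
      have hcross : ∀ x ∈ R, ∀ y ∈ S \ R, ¬ X.Adj x y := by
        intro x hx y hy hadj
        rw [Finset.mem_sdiff] at hy
        exact hy.2 (hclosed x hx y hy.1 hadj)
      have hRsub : R ⊆ S := Finset.filter_subset _ _
      have hRcard : R.card < S.card :=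
        Finset.card_lt_card ((Finset.ssubset_iff_of_subset hRsub).mpr ⟨b, hb, hbnR⟩)
      have hSRcard : (S \ R).card < S.card := by
        have h1 : a ∉ S \ R := fun h => (Finset.mem_sdiff.mp h).2 haR
        exact Finset.card_lt_card ((Finset.ssubset_iff_of_subset Finset.sdiff_subset).mpr ⟨a, ha, h1⟩)
      have hgood := goodcol_combine hcross (hmincard R hRcard) (hmincard _ hSRcard)
      rw [Finset.union_sdiff_of_subset hRsub] at hgood
      exact hSbad hgood
    exact (Finset.mem_filter.mp hbR).2
  -- a base edge
  obtain ⟨w₀, hw₀S⟩ := hSne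
  have hfilne : (S.filter (X.Adj w₀)).Nonempty := by
    rw [← Finset.card_pos]
    have := hmindeg w₀ hw₀S
    omega
  obtain ⟨u₀, hu₀⟩ := hfilne
  have hu₀S : u₀ ∈ S := (Finset.mem_filter.mp hu₀).1
  have hadj₀ : X.Adj w₀ u₀ := (Finset.mem_filter.mp hu₀).2
  -- maximum pairwise distance
  set M := ((S ×ˢ S).sup (fun q => d q.1 q.2)) with hM
  have hMle : ∀ p ∈ S, ∀ q ∈ S, d p q ≤ M := by
    intro p hp q hq
    rw [hM]
    exact Finset.le_sup (f := fun q => d q.1 q.2) (b := (p, q))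
      (Finset.mem_product.mpr ⟨hp, hq⟩)
  obtain ⟨qs, hqsmem, hqs⟩ := Finset.exists_mem_eq_sup (S ×ˢ S)
    (Finset.Nonempty.product ⟨w₀, hw₀S⟩ ⟨w₀, hw₀S⟩) (fun q => d q.1 q.2)
  have haS : qs.1 ∈ S := (Finset.mem_product.mp hqsmem).1
  have hbS : qs.2 ∈ S := (Finset.mem_product.mp hqsmem).2
  have hMval : d qs.1 qs.2 = M := hqs.symm
  have hM2 : 2 ≤ M := by
    have h1 : d w₀ u₀ ≤ M := hMle _ hw₀S _ hu₀S
    have h2 : d w₀ u₀ ≠ 0 := fun h => hadj₀.ne ((hzero _ _).mp h)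
    obtain ⟨r', hr'⟩ := heven w₀ u₀
    omega
  have hMeven : Even M := hMval ▸ heven qs.1 qs.2
  have habs : qs.1 ≠ qs.2 := by
    intro h
    have h0 := (hzero qs.1 qs.2).mpr h
    omega
  have hMub : M + 1 ≤ ℓ := hMval ▸ hub qs.1 qs.2
  -- the class relation
  set r : W → W → Prop := fun u x => u = x ∨ d u x < M with hr
  have hrefl : ∀ a, r a a := fun a => Or.inl rfl
  have hrsymm : ∀ a b, r a b → r b a := by
    intro a b h
    rcases h with h | h
    · exact Or.inl h.symm
    · exact Or.inr (by rw [hsym b a]; exact h)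
  have hrtrans : ∀ a b c, r a b → r b c → r a c := by
    intro a b c h1 h2
    rcases h1 with rfl | h1
    · exact h2
    rcases h2 with rfl | h2
    · exact Or.inr h1
    · exact Or.inr (lt_of_le_of_lt (hultra a b c) (max_lt h1 h2))
  have hforce : ∀ u ∈ S, ∀ x ∈ S, ∀ p : X.Walk u x, p.IsPath → p.length + M = ℓ → r u x := by
    intro u hu x hx p hp hplen
    by_contra hcon
    have hne : u ≠ x := fun h => hcon (Or.inl h)
    have hnlt : ¬ d u x < M := fun h => hcon (Or.inr h)
    have hdM : d u x = M := le_antisymm (hMle u hu x hx) (not_lt.mp hnlt)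
    exact hkey u x hne p hp (by omega)
  by_cases hM4 : 4 ≤ M
  · -- main branches
    by_cases hg1 : M + 1 = ℓ
    · -- g = 1 : no related-at-distance-M edges at all
      have hedge : ∀ x ∈ S, ∀ y ∈ S, X.Adj x y → r x y := by
        intro x hx y hy hadj
        have hp : (Walk.cons hadj Walk.nil).IsPath := by
          rw [SimpleGraph.Walk.cons_isPath_iff]
          refine ⟨SimpleGraph.Walk.IsPath.nil, ?_⟩
          simp [hadj.ne]
        refine hforce x hx y hy (Walk.cons hadj Walk.nil) hp ?_
        rw [SimpleGraph.Walk.length_cons, SimpleGraph.Walk.length_nil]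
        omega
      obtain ⟨p, hpS⟩ := hconn qs.1 haS qs.2 hbS
      have hchain := walk_chain r hrefl hrtrans S hedge p hpS
      rcases hchain with h | h
      · exact habs h
      · omega
    · -- 2 ≤ g : collapse
      have hcol2 : ∀ x ∈ S, ∀ y ∈ S, ∀ z ∈ S, X.Adj x y → X.Adj y z → r x z := by
        intro x hx y hy z hz hxy hyz
        by_cases hzx : z = x
        · exact Or.inl hzx.symm
        have hxz : x ≠ z := fun h => hzx h.symm
        have hyB : y ∉ ({x, z} : Finset W) := by
          simp only [Finset.mem_insert, Finset.mem_singleton]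
          push_neg
          exact ⟨hxy.ne', hyz.ne⟩
        have hBcard : ({x, z} : Finset W).card = 2 := Finset.card_pair hxz
        obtain ⟨c, Rw, hRpath, hRlen, hRS, hRB⟩ :=
          greedy hmindeg (ℓ - M - 1) {x, z} y hy hyB (by rw [hBcard]; omega)
        have hxRw : x ∉ Rw.support := fun h => hRB x h (by simp)
        have hzRw : z ∉ Rw.support := fun h => hRB z h (by simp)
        have hcS : c ∈ S := hRS c Rw.end_mem_support
        have hP₁ : (Walk.cons hxy Rw).IsPath := by
          rw [SimpleGraph.Walk.cons_isPath_iff]; exact ⟨hRpath, hxRw⟩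
        have hrxc : r x c := by
          refine hforce x hx c hcS _ hP₁ ?_
          rw [SimpleGraph.Walk.length_cons, hRlen]
          omega
        have hzrev : z ∉ Rw.reverse.support := by
          rw [SimpleGraph.Walk.support_reverse, List.mem_reverse]; exact hzRw
        have hP₂ : (Rw.reverse.concat hyz).IsPath :=
          concat_isPath _ hRpath.reverse hyz hzrev
        have hrcz : r c z := by
          refine hforce c hcS z hz _ hP₂ ?_
          rw [SimpleGraph.Walk.length_concat, SimpleGraph.Walk.length_reverse, hRlen]
          omega
        exact hrtrans _ _ _ hrxc hrcz
      have hts := twostep r hrefl hrtrans S hcol2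
      have hodd : ∀ {b : W} (p : X.Walk u₀ b), (∀ z ∈ p.support, z ∈ S) →
          ¬ Even p.length → r w₀ b := by
        intro b p hpS hoddlen
        match p with
        | Walk.nil => exact absurd (by simp) hoddlen
        | Walk.cons h₁ q =>
          rename_i s
          have hsS : s ∈ S := by
            apply hpS
            rw [SimpleGraph.Walk.support_cons]
            exact List.mem_cons_of_mem _ q.start_mem_support
          have hqS : ∀ z ∈ q.support, z ∈ S := fun z hz => hpS z (by
            rw [SimpleGraph.Walk.support_cons]
            exact List.mem_cons_of_mem _ hz)
          have hqeven : Even q.length := by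
            rw [SimpleGraph.Walk.length_cons, Nat.even_add_one] at hoddlen
            exact not_not.mp hoddlen
          have hsb : r s b := hts q.length q rfl hqeven hqS
          have hw₀s : r w₀ s := hcol2 w₀ hw₀S u₀ hu₀S s hsS hadj₀ h₁
          exact hrtrans _ _ _ hw₀s hsb
      by_cases hbase : r u₀ w₀
      · have hall : ∀ b ∈ S, r u₀ b := by
          intro b hb
          obtain ⟨p, hpS⟩ := hconn u₀ hu₀S b hb
          rcases Nat.even_or_odd p.length with hev | hod
          · exact hts p.length p rfl hev hpS
          · exact hrtrans _ _ _ hbase (hodd p hpS (Nat.not_even_iff_odd.mpr hod))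
        have h1 := hall qs.1 haS
        have h2 := hall qs.2 hbS
        have h3 : r qs.1 qs.2 := hrtrans _ _ _ (hrsymm _ _ h1) h2
        rcases h3 with h | h
        · exact habs h
        · omega
      · apply hSbad
        have h02 : 0 < ℓ - 2 := by omega
        have h12 : 1 < ℓ - 2 := by omega
        refine ⟨fun b => if r u₀ b then ⟨0, h02⟩ else ⟨1, h12⟩, ?_⟩
        intro a ha b hb hadj heq
        simp only [] at heq
        obtain ⟨p, hpS⟩ := hconn u₀ hu₀S a ha
        have hpS' : ∀ z ∈ (p.concat hadj).support, z ∈ S := by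
          intro z hz
          rw [SimpleGraph.Walk.support_concat, List.mem_append] at hz
          rcases hz with hz | hz
          · exact hpS z hz
          · rw [List.mem_singleton] at hz; exact hz ▸ hb
        have hnotboth : ∀ cc, r u₀ cc → r w₀ cc → False := by
          intro cc h1 h2
          exact hbase (hrtrans _ _ _ h1 (hrsymm _ _ h2))
        rcases Nat.even_or_odd p.length with hev | hod
        · have h1 : r u₀ a := hts p.length p rfl hev hpS
          have h2 : r w₀ b := by
            refine hodd (p.concat hadj) hpS' ?_
            rw [SimpleGraph.Walk.length_concat, Nat.even_add_one]
            exact not_not_intro hev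
          have h3 : ¬ r u₀ b := fun h => hnotboth b h h2
          rw [if_pos h1, if_neg h3] at heq
          exact absurd (congrArg Fin.val heq) (by simp)
        · have h1 : r w₀ a := hodd p hpS (Nat.not_even_iff_odd.mpr hod)
          have h2 : r u₀ b := by
            refine hts (p.concat hadj).length (p.concat hadj) rfl ?_ hpS'
            rw [SimpleGraph.Walk.length_concat, Nat.even_add_one]
            exact Nat.not_even_iff_odd.mpr hod
          have h3 : ¬ r u₀ a := fun h => hnotboth a h h1
          rw [if_neg h3, if_pos h2] at heq
          exact absurd (congrArg Fin.val heq) (by simp)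
  · -- M = 2
    have hM2' : M = 2 := by
      obtain ⟨m₂, hm₂⟩ := hMeven
      omega
    obtain ⟨e, p, hp, hplen, hpS, -⟩ :=
      greedy hmindeg (ℓ - 2) ∅ w₀ hw₀S (Finset.notMem_empty w₀)
        (by rw [Finset.card_empty]; omega)
    have heS : e ∈ S := hpS e p.end_mem_support
    have hne : w₀ ≠ e := by
      intro h
      subst h
      have := loop_isPath_length p hp
      omega
    have hre := hforce w₀ hw₀S e heS p hp (by omega)
    rcases hre with h | h
    · exact hne h
    · have h2 : d w₀ e ≠ 0 := fun hh => hne ((hzero _ _).mp hh)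
      obtain ⟨r', hr'⟩ := heven w₀ e
      omega

end CoreMain

/-- If `G` has no cycle of length `ℓ`, `T` is a tree subgraph of `G`, `v ∈ T`,
`h < ℓ/2`, and `Z` is the set of vertices at distance exactly `h` from `v` in `T`,
then `G[Z]` is `(ℓ−2)`-colourable, and `Z` contains an independent set of `G` of size
at least `|Z|/(ℓ−2)`. -/
theorem stmt_11 {V : Type*} [Fintype V] (G : SimpleGraph V) (ℓ h : ℕ) (hℓ : 3 ≤ ℓ)
    (hno : ¬ ∃ (v : V) (c : G.Walk v v), c.IsCycle ∧ c.length = ℓ)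
    (T : G.Subgraph) (hT : T.coe.IsTree) (v : T.verts) (hh : 2 * h < ℓ)
    (Z : Set V) (hZ : Z = {u : V | ∃ hu : u ∈ T.verts, T.coe.dist v ⟨u, hu⟩ = h}) :
    (G.induce Z).Colorable (ℓ - 2) ∧
      ∃ S : Set V, S ⊆ Z ∧ (∀ u ∈ S, ∀ w ∈ S, u ≠ w → ¬ G.Adj u w) ∧
        Z.ncard ≤ (ℓ - 2) * S.ncard := by
  classical
  have hZ' : ∀ y, y ∈ Z ↔ y ∈ {u : V | ∃ hu : u ∈ T.verts, T.coe.dist v ⟨u, hu⟩ = h} :=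
    fun y => by rw [hZ]
  have hmem : ∀ u : Z, ∃ hu : (u : V) ∈ T.verts, T.coe.dist v ⟨u, hu⟩ = h := fun u =>
    (hZ' u.1).mp u.2
  set lift : Z → T.verts := fun u => ⟨u.1, (hmem u).choose⟩ with hliftdef
  have hdepth : ∀ u : Z, T.coe.dist v (lift u) = h := fun u => (hmem u).choose_spec
  have hlinj : Function.Injective lift := by
    intro a b hab
    exact Subtype.ext (show (a : V) = (b : V) from congrArg (fun t : T.verts => (t : V)) hab)
  set X := G.induce Z with hX
  set d : Z → Z → ℕ := fun u x => T.coe.dist (lift u) (lift x) with hd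
  have hsym : ∀ u x : Z, d u x = d x u := fun u x => SimpleGraph.dist_comm
  have hzero : ∀ u x : Z, d u x = 0 ↔ u = x := by
    intro u x
    rw [show d u x = T.coe.dist (lift u) (lift x) from rfl]
    rw [SimpleGraph.Connected.dist_eq_zero_iff hT.isConnected]
    constructor
    · exact fun hzz => hlinj hzz
    · exact fun hzz => hzz ▸ rfl
  have hlev : ∀ u x : Z, ∃ m, m ≤ h ∧ d u x + 2 * m = 2 * h := fun u x =>
    tree_dist_level hT v h (hdepth u) (hdepth x)
  have heven : ∀ u x : Z, Even (d u x) := by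
    intro u x
    obtain ⟨m, hm, heq⟩ := hlev u x
    exact ⟨h - m, by omega⟩
  have hub : ∀ u x : Z, d u x + 1 ≤ ℓ := by
    intro u x
    obtain ⟨m, hm, heq⟩ := hlev u x
    omega
  have hultra : ∀ u x y : Z, d u y ≤ max (d u x) (d x y) := fun u x y =>
    tree_ultra hT v h (hdepth u) (hdepth x) (hdepth y)
  have hhom : ∀ (a : T.verts), T.hom a = (a : V) := fun a => rfl
  have hkey : ∀ u x : Z, u ≠ x → ∀ p : X.Walk u x, p.IsPath → p.length + d u x = ℓ → False := by
    intro u x hne p hp hplen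
    obtain ⟨R, hRpath, hRlen⟩ := exists_geodesic hT (lift u) (lift x)
    have hint : ∀ w ∈ R.support, w ≠ lift u → w ≠ lift x → T.coe.dist v w < h :=
      fun w hw hwu hwx => tree_interior hT v h R hRpath (hdepth u) (hdepth x) hw hwu hwx
    let f : X →g G := ⟨Subtype.val, fun {a b} hab => hab⟩
    have hfinj : Function.Injective (⇑f) := Subtype.val_injective
    set A : G.Walk (u : V) (x : V) := p.map f with hA
    have hApath : A.IsPath := SimpleGraph.Walk.map_isPath_of_injective hfinj hp
    have hhominj : Function.Injective (⇑T.hom) := by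
      intro a b hab
      exact Subtype.ext hab
    set B' : G.Walk (u : V) (x : V) := R.map T.hom with hB'
    have hB'path : B'.IsPath := SimpleGraph.Walk.map_isPath_of_injective hhominj hRpath
    have hne' : (u : V) ≠ (x : V) := fun hvv => hne (Subtype.ext hvv)
    have hAZ : ∀ z ∈ A.support, z ∈ Z := by
      intro z hz
      rw [hA, SimpleGraph.Walk.support_map] at hz
      obtain ⟨zz, hzz, rfl⟩ := List.mem_map.mp hz
      exact zz.2
    have hBZ : ∀ z ∈ B'.reverse.support, z ≠ (u : V) → z ≠ (x : V) → z ∉ Z := by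
      intro z hz hzu hzx hzZ
      rw [SimpleGraph.Walk.support_reverse, List.mem_reverse,
        (show B'.support = R.support.map T.hom by exact SimpleGraph.Walk.support_map ..)] at hz
      obtain ⟨w, hw, hwz⟩ := List.mem_map.mp hz
      have hwz' : (w : V) = z := hwz
      have hwu : w ≠ lift u := fun hq => hzu (by rw [← hwz', hq])
      have hwx : w ≠ lift x := fun hq => hzx (by rw [← hwz', hq])
      have hlt := hint w hw hwu hwx
      rw [hZ] at hzZ
      obtain ⟨hu', hdist'⟩ := hzZ
      have : (⟨z, hu'⟩ : T.verts) = w := Subtype.ext hwz'.symm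
      rw [this] at hdist'
      omega
    have hlen3 : 3 ≤ A.length + B'.reverse.length := by
      rw [SimpleGraph.Walk.length_reverse, hA, SimpleGraph.Walk.length_map,
        (show B'.length = R.length by exact SimpleGraph.Walk.length_map ..), hRlen]
      have hthis : p.length + T.coe.dist (lift u) (lift x) = ℓ := hplen
      omega
    have hcyc := build_cycle A B'.reverse hApath hB'path.reverse hne' Z hAZ hBZ hlen3
    apply hno
    refine ⟨(u : V), A.append B'.reverse, hcyc, ?_⟩
    rw [SimpleGraph.Walk.length_append, SimpleGraph.Walk.length_reverse, hA,
      SimpleGraph.Walk.length_map, (show B'.length = R.length by exact SimpleGraph.Walk.length_map ..), hRlen]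
    have hthis : p.length + T.coe.dist (lift u) (lift x) = ℓ := hplen
    omega
  haveI : Fintype Z := Set.Finite.fintype (Set.toFinite Z)
  have hcolorable : X.Colorable (ℓ - 2) :=
    core_colorable hℓ d hsym hzero heven hub hultra hkey
  refine ⟨hcolorable, ?_⟩
  obtain ⟨C⟩ := hcolorable
  have hposcolors : (0 : ℕ) < ℓ - 2 := by omega
  obtain ⟨i, -, hmax⟩ := Finset.exists_max_image (Finset.univ : Finset (Fin (ℓ - 2)))
    (fun j => (Finset.univ.filter (fun z : Z => C z = j)).card)
    ⟨⟨0, hposcolors⟩, Finset.mem_univ _⟩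
  set Acl := Finset.univ.filter (fun z : Z => C z = i) with hAcl
  refine ⟨↑(Acl.image (fun z : Z => (z : V))), ?_, ?_, ?_⟩
  · intro zz hzz
    obtain ⟨w, hw, rfl⟩ := Finset.mem_image.mp (Finset.mem_coe.mp hzz)
    exact w.2
  · intro uu huu ww hww hneq hadj
    obtain ⟨zu, hzu, rfl⟩ := Finset.mem_image.mp (Finset.mem_coe.mp huu)
    obtain ⟨zw, hzw, rfl⟩ := Finset.mem_image.mp (Finset.mem_coe.mp hww)
    have hadj' : X.Adj zu zw := hadj
    have hvalid := C.valid hadj'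
    rw [(Finset.mem_filter.mp hzu).2, (Finset.mem_filter.mp hzw).2] at hvalid
    exact hvalid rfl
  · have hcount : (Finset.univ : Finset Z).card =
        ∑ j : Fin (ℓ - 2), (Finset.univ.filter (fun z : Z => C z = j)).card :=
      Finset.card_eq_sum_card_fiberwise (fun z _ => Finset.mem_univ (C z))
    have hsum : ∑ j : Fin (ℓ - 2), (Finset.univ.filter (fun z : Z => C z = j)).card ≤
        (ℓ - 2) * Acl.card := by
      have hb := Finset.sum_le_card_nsmul Finset.univ
        (fun j => (Finset.univ.filter (fun z : Z => C z = j)).card) Acl.card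
        (fun j _ => hmax j (Finset.mem_univ j))
      simpa [Finset.card_univ, Fintype.card_fin, smul_eq_mul] using hb
    have hZcard : Z.ncard = (Finset.univ : Finset Z).card := by
      rw [← Nat.card_coe_set_eq, Nat.card_eq_fintype_card, Finset.card_univ]
    have hScard : (↑(Acl.image (fun z : Z => (z : V))) : Set V).ncard = Acl.card := by
      rw [Set.ncard_coe_finset, Finset.card_image_of_injective _ Subtype.val_injective]
    rw [hZcard, hScard, hcount]
    exact hsum
end
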